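/- For any three density matrices ρ, σ, ξ on the same finite-dimensional Hilbert space, F(ρ, ξ) + F(σ, ξ) ≤ 1 + √(F(ρ, σ)). -/

import Mathlib

open Matrix ComplexOrder

open Classical in
noncomputable def matSqrt {d : Type*} [Fintype d] [DecidableEq d]
    (A : Matrix d d ℂ) : Matrix d d ℂ :=
  if h : A.PosSemidef then
    (h.1.eigenvectorUnitary : Matrix d d ℂ) *
      diagonal ((↑) ∘ Real.sqrt ∘ h.1.eigenvalues) *
      (star h.1.eigenvectorUnitary : Matrix d d ℂ)
  else 0

/-- Fidelity `F(ρ,σ) = (Tr √(√σ ρ √σ))²`. -/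
noncomputable def fid {d : Type*} [Fintype d] [DecidableEq d]
    (ρ σ : Matrix d d ℂ) : ℝ :=
  ((matSqrt (matSqrt σ * ρ * matSqrt σ)).trace).re ^ 2
section NSLemmas
set_option linter.unusedSectionVars false
set_option maxHeartbeats 1000000
variable {n : Type*} [Fintype n] [DecidableEq n]

noncomputable def Matrix.PosSemidef.sqrt {A : Matrix n n ℂ} (hA : A.PosSemidef) :
    Matrix n n ℂ :=
  (hA.1.eigenvectorUnitary : Matrix n n ℂ) *
    diagonal ((↑) ∘ Real.sqrt ∘ hA.1.eigenvalues) *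
    (star hA.1.eigenvectorUnitary : Matrix n n ℂ)

lemma Matrix.PosSemidef.posSemidef_sqrt {A : Matrix n n ℂ} (hA : A.PosSemidef) :
    hA.sqrt.PosSemidef := by
  have hd : (diagonal ((↑) ∘ Real.sqrt ∘ hA.1.eigenvalues) : Matrix n n ℂ).PosSemidef := by
    refine posSemidef_diagonal_iff.mpr fun i => ?_
    simp only [Function.comp_apply]
    exact Complex.zero_le_real.mpr (Real.sqrt_nonneg _)
  exact hd.mul_mul_conjTranspose_same (hA.1.eigenvectorUnitary : Matrix n n ℂ)

lemma Matrix.PosSemidef.sqrt_mul_self {A : Matrix n n ℂ} (hA : A.PosSemidef) :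
    hA.sqrt * hA.sqrt = A := by
  have hU : (star hA.1.eigenvectorUnitary : Matrix n n ℂ) *
      (hA.1.eigenvectorUnitary : Matrix n n ℂ) = 1 :=
    (Matrix.mem_unitaryGroup_iff').mp hA.1.eigenvectorUnitary.2
  have hD : (diagonal ((↑) ∘ Real.sqrt ∘ hA.1.eigenvalues) : Matrix n n ℂ) *
      diagonal ((↑) ∘ Real.sqrt ∘ hA.1.eigenvalues)
      = diagonal (RCLike.ofReal ∘ hA.1.eigenvalues) := by
    rw [diagonal_mul_diagonal]
    congr 1
    funext i
    simp only [Function.comp_apply]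
    exact (Complex.ofReal_mul _ _).symm.trans
      (congrArg Complex.ofReal (Real.mul_self_sqrt (hA.eigenvalues_nonneg i)))
  unfold Matrix.PosSemidef.sqrt
  set U : Matrix n n ℂ := (hA.1.eigenvectorUnitary : Matrix n n ℂ)
  set D : Matrix n n ℂ := diagonal ((↑) ∘ Real.sqrt ∘ hA.1.eigenvalues)
  calc U * D * (star hA.1.eigenvectorUnitary : Matrix n n ℂ) *
        (U * D * (star hA.1.eigenvectorUnitary : Matrix n n ℂ))
      = U * (D * D) * (star hA.1.eigenvectorUnitary : Matrix n n ℂ) := by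
        simp only [Matrix.mul_assoc]
        rw [← Matrix.mul_assoc (star hA.1.eigenvectorUnitary : Matrix n n ℂ) U, hU,
          Matrix.one_mul]
    _ = A := by
        rw [hD]
        have h := hA.1.spectral_theorem
        rw [Unitary.conjStarAlgAut_apply] at h
        exact h.symm

lemma matSqrt_of_posSemidef {A : Matrix n n ℂ} (hA : A.PosSemidef) :
    matSqrt A = hA.sqrt := dif_pos hA

lemma NS.polar (A : Matrix n n ℂ) :
    ∃ V : Matrix n n ℂ, matSqrt (A * Aᴴ) * V = A ∧
      matSqrt (A * Aᴴ) * (V * Vᴴ) = matSqrt (A * Aᴴ) ∧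
      (1 - V * Vᴴ).PosSemidef ∧ (1 - Vᴴ * V).PosSemidef := by
  have hH : (A * Aᴴ).PosSemidef := posSemidef_self_mul_conjTranspose A
  set E : Matrix n n ℂ := (hH.1.eigenvectorUnitary : Matrix n n ℂ) with hEdef
  set lam : n → ℝ := hH.1.eigenvalues with hlamdef
  have hlam : ∀ i, 0 ≤ lam i := hH.eigenvalues_nonneg
  have hEE : Eᴴ * E = 1 := by
    simpa [Matrix.star_eq_conjTranspose] using
      (Matrix.mem_unitaryGroup_iff').mp hH.1.eigenvectorUnitary.2
  have hEE' : E * Eᴴ = 1 := by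
    simpa [Matrix.star_eq_conjTranspose] using
      (Matrix.mem_unitaryGroup_iff).mp hH.1.eigenvectorUnitary.2
  -- conjugation product rule
  have key : ∀ f g : n → ℂ, (E * diagonal f * Eᴴ) * (E * diagonal g * Eᴴ)
      = E * diagonal (fun i => f i * g i) * Eᴴ := by
    intro f g
    calc (E * diagonal f * Eᴴ) * (E * diagonal g * Eᴴ)
        = E * diagonal f * (Eᴴ * E) * diagonal g * Eᴴ := by
          simp only [Matrix.mul_assoc]
      _ = E * (diagonal f * diagonal g) * Eᴴ := by
          rw [hEE]; simp only [Matrix.mul_one, Matrix.mul_assoc]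
      _ = E * diagonal (fun i => f i * g i) * Eᴴ := by
          rw [diagonal_mul_diagonal]
  -- Hermitian-ness of real-diagonal conjugations
  have herm : ∀ f : n → ℝ, (E * diagonal (fun i => (f i : ℂ)) * Eᴴ)ᴴ
      = E * diagonal (fun i => (f i : ℂ)) * Eᴴ := by
    intro f
    rw [conjTranspose_mul, conjTranspose_mul, conjTranspose_conjTranspose,
      diagonal_conjTranspose]
    have : star (fun i => (f i : ℂ)) = fun i => (f i : ℂ) := by
      funext i; simp [Complex.conj_ofReal]
    rw [this, Matrix.mul_assoc]
  set g : n → ℝ := fun i => (Real.sqrt (lam i))⁻¹ with hgdef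
  set p : n → ℝ := fun i => if lam i = 0 then 0 else 1 with hpdef
  set Pinv : Matrix n n ℂ := E * diagonal (fun i => (g i : ℂ)) * Eᴴ with hPinv
  set proj : Matrix n n ℂ := E * diagonal (fun i => (p i : ℂ)) * Eᴴ with hproj
  set V : Matrix n n ℂ := Pinv * A with hV
  have hQ : matSqrt (A * Aᴴ) = E * diagonal (fun i => (Real.sqrt (lam i) : ℂ)) * Eᴴ := by
    rw [matSqrt_of_posSemidef hH]; rfl
  have hspec : A * Aᴴ = E * diagonal (fun i => (lam i : ℂ)) * Eᴴ := by
    have h := hH.1.spectral_theorem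
    rw [Unitary.conjStarAlgAut_apply] at h
    exact h
  -- scalar identities
  have sg : ∀ i, (Real.sqrt (lam i) : ℂ) * (g i : ℂ) = (p i : ℂ) := by
    intro i
    by_cases h : lam i = 0
    · simp [hgdef, hpdef, h]
    · have hs : Real.sqrt (lam i) ≠ 0 :=
        Real.sqrt_ne_zero'.mpr (lt_of_le_of_ne (hlam i) (Ne.symm h))
      simp only [hgdef, hpdef, if_neg h, Complex.ofReal_inv, Complex.ofReal_one]
      rw [mul_inv_cancel₀ (Complex.ofReal_ne_zero.mpr hs)]
  have glg : ∀ i, (g i : ℂ) * (lam i : ℂ) * (g i : ℂ) = (p i : ℂ) := by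
    intro i
    by_cases h : lam i = 0
    · simp [hgdef, hpdef, h]
    · have hs : Real.sqrt (lam i) ≠ 0 :=
        Real.sqrt_ne_zero'.mpr (lt_of_le_of_ne (hlam i) (Ne.symm h))
      have hlam' : (lam i : ℂ) = (Real.sqrt (lam i) : ℂ) * (Real.sqrt (lam i) : ℂ) := by
        rw [← Complex.ofReal_mul, Real.mul_self_sqrt (hlam i)]
      rw [hlam', hpdef]
      simp only [if_neg h, Complex.ofReal_one, hgdef, Complex.ofReal_inv]
      field_simp
  have pg : ∀ i, (p i : ℂ) * (g i : ℂ) = (g i : ℂ) := by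
    intro i
    by_cases h : lam i = 0
    · simp [hgdef, hpdef, h]
    · simp [hpdef, if_neg h]
  have sp : ∀ i, (Real.sqrt (lam i) : ℂ) * (p i : ℂ) = (Real.sqrt (lam i) : ℂ) := by
    intro i
    by_cases h : lam i = 0
    · simp [hpdef, h]
    · simp [hpdef, if_neg h]
  have lp : ∀ i, (lam i : ℂ) * (p i : ℂ) = (lam i : ℂ) := by
    intro i
    by_cases h : lam i = 0
    · simp [h]
    · simp [hpdef, if_neg h]
  have hPinvH : Pinvᴴ = Pinv := herm g
  have hVV : V * Vᴴ = proj := by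
    have h1 : V * Vᴴ = Pinv * (A * Aᴴ) * Pinv := by
      rw [hV, conjTranspose_mul, hPinvH]
      simp only [Matrix.mul_assoc]
    rw [h1, hspec, hPinv, hproj, key, key]
    have hfun : (fun i => (g i : ℂ) * (lam i : ℂ) * (g i : ℂ)) = fun i => ((p i : ℝ) : ℂ) :=
      funext glg
    rw [hfun]
  have projA : proj * A = A := by
    have h0 : proj * (A * Aᴴ) = A * Aᴴ := by
      rw [hspec, hproj, key]
      have hfun : (fun i => (p i : ℂ) * (lam i : ℂ)) = fun i => ((lam i : ℝ) : ℂ) :=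
        funext fun i => by rw [mul_comm]; exact lp i
      rw [hfun]
    have hM : ((1 - proj) * A) * ((1 - proj) * A)ᴴ = 0 := by
      have hprojH : (1 - proj)ᴴ = 1 - proj := by
        rw [conjTranspose_sub, conjTranspose_one, hproj, herm p]
      rw [conjTranspose_mul, hprojH]
      calc (1 - proj) * A * (Aᴴ * (1 - proj))
          = ((1 - proj) * (A * Aᴴ)) * (1 - proj) := by simp only [Matrix.mul_assoc]
        _ = 0 := by
            rw [Matrix.sub_mul, Matrix.one_mul, h0, sub_self, Matrix.zero_mul]
    have h2 := Matrix.self_mul_conjTranspose_eq_zero.mp hM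
    rwa [Matrix.sub_mul, Matrix.one_mul, sub_eq_zero, eq_comm] at h2
  refine ⟨V, ?_, ?_, ?_, ?_⟩
  · rw [hQ, hV, hPinv, ← Matrix.mul_assoc, key]
    have h3 : (fun i => (Real.sqrt (lam i) : ℂ) * (g i : ℂ)) = fun i => (p i : ℂ) := by
      funext i; exact sg i
    rw [h3, ← hproj, projA]
  · rw [hVV, hQ, hproj, key]
    have hfun : (fun i => (Real.sqrt (lam i) : ℂ) * (p i : ℂ)) = fun i => ((Real.sqrt (lam i) : ℝ) : ℂ) :=
      funext sp
    rw [hfun]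
  · rw [hVV]
    have hd : (Matrix.diagonal (fun i => ((1 - p i : ℝ) : ℂ))).PosSemidef := by
      refine posSemidef_diagonal_iff.mpr fun i => ?_
      rw [Complex.zero_le_real, hpdef]
      by_cases h : lam i = 0 <;> simp [h]
    have heq : 1 - proj = E * Matrix.diagonal (fun i => ((1 - p i : ℝ) : ℂ)) * Eᴴ := by
      have h4 : Matrix.diagonal (fun i => ((1 - p i : ℝ) : ℂ))
          = 1 - Matrix.diagonal (fun i => (p i : ℂ)) := by
        rw [← Matrix.diagonal_one, Matrix.diagonal_sub]
        congr 1; funext i; push_cast; ring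
      rw [h4, Matrix.mul_sub, Matrix.sub_mul, Matrix.mul_one, hEE', hproj]
    rw [heq]
    exact hd.mul_mul_conjTranspose_same E
  · have projPinv : proj * Pinv = Pinv := by
      rw [hproj, hPinv, key]
      have hfun : (fun i => (p i : ℂ) * (g i : ℂ)) = fun i => ((g i : ℝ) : ℂ) :=
        funext pg
      rw [hfun]
    have projV : proj * V = V := by
      rw [hV, ← Matrix.mul_assoc, projPinv]
    have hSS : (Vᴴ * V) * (Vᴴ * V) = Vᴴ * V := by
      calc (Vᴴ * V) * (Vᴴ * V) = Vᴴ * ((V * Vᴴ) * V) := by simp only [Matrix.mul_assoc]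
        _ = Vᴴ * V := by rw [hVV, projV]
    have hSH : (Vᴴ * V)ᴴ = Vᴴ * V := by
      rw [conjTranspose_mul, conjTranspose_conjTranspose]
    have hTH : (1 - Vᴴ * V)ᴴ = 1 - Vᴴ * V := by
      rw [conjTranspose_sub, conjTranspose_one, hSH]
    have hTT : (1 - Vᴴ * V) * (1 - Vᴴ * V) = 1 - Vᴴ * V := by
      rw [Matrix.mul_sub, Matrix.mul_one, Matrix.sub_mul, Matrix.one_mul, hSS]
      abel
    have := Matrix.posSemidef_conjTranspose_mul_self (1 - Vᴴ * V)
    rwa [hTH, hTT] at this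

lemma NS.diag_nonneg {M : Matrix n n ℂ} (hM : M.PosSemidef) (i : n) : 0 ≤ M i i := by
  exact hM.diag_nonneg

lemma NS.trace_eq_re {M : Matrix n n ℂ} (hM : M.PosSemidef) :
    M.trace = (M.trace.re : ℂ) := by
  have h := hM.isHermitian
  have : star M.trace = M.trace := by rw [← Matrix.trace_conjTranspose, h.eq]
  exact (Complex.conj_eq_iff_re.mp this).symm

lemma NS.trace_re_nonneg {M : Matrix n n ℂ} (hM : M.PosSemidef) :
    0 ≤ M.trace.re := by
  have h : M.trace = ∑ i, M i i := rfl
  rw [h, Complex.re_sum]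
  exact Finset.sum_nonneg fun i _ => (Complex.le_def.mp (NS.diag_nonneg hM i)).1

/-- trace of product of two PSD matrices has nonnegative real part -/
lemma NS.trace_mul_re_nonneg {P S : Matrix n n ℂ} (hP : P.PosSemidef) (hS : S.PosSemidef) :
    0 ≤ ((P * S).trace).re := by
  have h1 : P * S = hP.sqrt * (hP.sqrt * S) := by
    rw [← Matrix.mul_assoc, hP.sqrt_mul_self]
  have h2 : ((hP.sqrt * (hP.sqrt * S)).trace) = ((hP.sqrt * S * hP.sqrt).trace) := by
    rw [Matrix.trace_mul_comm, Matrix.mul_assoc]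
  have h3 : (hP.sqrt * S * hP.sqrt).PosSemidef := by
    have := hS.mul_mul_conjTranspose_same hP.sqrt
    rwa [hP.posSemidef_sqrt.isHermitian.eq] at this
  rw [h1, h2]
  exact NS.trace_re_nonneg h3

lemma NS.trace_conj_sum (A B : Matrix n n ℂ) :
    (Aᴴ * B).trace = ∑ p : n × n, (starRingEnd ℂ) (A p.1 p.2) * B p.1 p.2 := by
  rw [Matrix.trace, ← Finset.univ_product_univ, Finset.sum_product]
  simp only [Matrix.diag, Matrix.mul_apply, Matrix.conjTranspose_apply]
  rw [Finset.sum_comm]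
  simp [RingHom.comp_apply]

lemma NS.trace_self_re (A : Matrix n n ℂ) :
    (Aᴴ * A).trace.re = ∑ p : n × n, ‖A p.1 p.2‖ ^ 2 := by
  rw [NS.trace_conj_sum, Complex.re_sum]
  congr 1; ext p
  rw [Complex.sq_norm]
  simp [Complex.normSq_apply]

lemma NS.cs' (A B : Matrix n n ℂ) :
    ‖(Aᴴ * B).trace‖ ≤
      Real.sqrt ((Aᴴ * A).trace.re) * Real.sqrt ((Bᴴ * B).trace.re) := by
  rw [NS.trace_conj_sum, NS.trace_self_re, NS.trace_self_re]
  calc ‖∑ p : n × n, (starRingEnd ℂ) (A p.1 p.2) * B p.1 p.2‖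
      ≤ ∑ p : n × n, ‖A p.1 p.2‖ * ‖B p.1 p.2‖ := by
        refine (norm_sum_le _ _).trans ?_
        apply le_of_eq
        congr 1; ext p
        simp [_root_.map_mul]
    _ ≤ Real.sqrt (∑ p : n × n, ‖A p.1 p.2‖ ^ 2) *
        Real.sqrt (∑ p : n × n, ‖B p.1 p.2‖ ^ 2) := by
        have h := Finset.sum_mul_sq_le_sq_mul_sq Finset.univ
          (fun p : n × n => ‖A p.1 p.2‖) (fun p => ‖B p.1 p.2‖)
        have h1 : 0 ≤ ∑ p : n × n, ‖A p.1 p.2‖ ^ 2 :=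
          Finset.sum_nonneg fun p _ => sq_nonneg _
        have h2 : 0 ≤ ∑ p : n × n, ‖B p.1 p.2‖ ^ 2 :=
          Finset.sum_nonneg fun p _ => sq_nonneg _
        have h3 : 0 ≤ ∑ p : n × n, ‖A p.1 p.2‖ * ‖B p.1 p.2‖ :=
          Finset.sum_nonneg fun p _ => mul_nonneg (norm_nonneg _) (norm_nonneg _)
        rw [← Real.sqrt_mul h1]
        exact (Real.le_sqrt h3 (mul_nonneg h1 h2)).mpr h

lemma NS.abs_trace_mul_le (C X : Matrix n n ℂ) (hX : (1 - X * Xᴴ).PosSemidef) :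
    ‖(C * X).trace‖ ≤ ((matSqrt (Cᴴ * C)).trace).re := by
  obtain ⟨V, hV1, hV2, hV3, hV4⟩ := NS.polar Cᴴ
  simp only [conjTranspose_conjTranspose] at hV1 hV2
  have hCC : (Cᴴ * C).PosSemidef := posSemidef_conjTranspose_mul_self C
  have hQ : matSqrt (Cᴴ * C) = hCC.sqrt := matSqrt_of_posSemidef hCC
  set Q : Matrix n n ℂ := hCC.sqrt with hQdef
  rw [hQ] at hV1 hV2 ⊢
  have hQpsd : Q.PosSemidef := hCC.posSemidef_sqrt
  have hQH : Qᴴ = Q := hQpsd.isHermitian.eq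
  have hC : C = Vᴴ * Q := by
    have := congrArg conjTranspose hV1
    rw [conjTranspose_mul, conjTranspose_conjTranspose, hQH] at this
    exact this.symm
  set R : Matrix n n ℂ := hQpsd.sqrt with hRdef
  have hRH : Rᴴ = R := hQpsd.posSemidef_sqrt.isHermitian.eq
  have hRR : R * R = Q := hQpsd.sqrt_mul_self
  set Y : Matrix n n ℂ := X * Vᴴ with hYdef
  -- trace identity
  have htr : (C * X).trace = (Rᴴ * (R * Y)).trace := by
    rw [hC, hRH]
    calc (Vᴴ * Q * X).trace = (Q * X * Vᴴ).trace := by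
          rw [Matrix.trace_mul_cycle, Matrix.trace_mul_cycle]
      _ = (R * (R * Y)).trace := by
          rw [← hRR, hYdef]; simp only [Matrix.mul_assoc]
  -- (1 - Y * Yᴴ) is PSD
  have hYY : (1 - Y * Yᴴ).PosSemidef := by
    have h1 : Y * Yᴴ = X * (Vᴴ * V) * Xᴴ := by
      rw [hYdef, conjTranspose_mul, conjTranspose_conjTranspose]
      simp only [Matrix.mul_assoc]
    have h2 : 1 - Y * Yᴴ = (1 - X * Xᴴ) + X * (1 - Vᴴ * V) * Xᴴ := by
      rw [h1, Matrix.mul_sub, Matrix.mul_one, Matrix.sub_mul]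
      abel
    rw [h2]
    exact hX.add (hV4.mul_mul_conjTranspose_same X)
  -- bound second factor
  have hb : ((R * Y)ᴴ * (R * Y)).trace.re ≤ (Q.trace).re := by
    have h1 : ((R * Y)ᴴ * (R * Y)).trace = (Q * (Y * Yᴴ)).trace := by
      rw [conjTranspose_mul, hRH]
      calc (Yᴴ * R * (R * Y)).trace = (Yᴴ * (Q * Y)).trace := by
            rw [← hRR]; simp only [Matrix.mul_assoc]
        _ = (Q * Y * Yᴴ).trace := by rw [Matrix.trace_mul_comm, Matrix.mul_assoc]
        _ = (Q * (Y * Yᴴ)).trace := by rw [Matrix.mul_assoc]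
    have h2 : 0 ≤ ((Q * (1 - Y * Yᴴ)).trace).re := NS.trace_mul_re_nonneg hQpsd hYY
    have h3 : (Q * (1 - Y * Yᴴ)).trace = Q.trace - (Q * (Y * Yᴴ)).trace := by
      rw [Matrix.mul_sub, Matrix.mul_one, Matrix.trace_sub]
    rw [h3, Complex.sub_re] at h2
    rw [h1]; linarith
  have hQtr : 0 ≤ (Q.trace).re := NS.trace_re_nonneg hQpsd
  calc ‖(C * X).trace‖ = ‖(Rᴴ * (R * Y)).trace‖ := by rw [htr]
    _ ≤ Real.sqrt ((Rᴴ * R).trace.re) * Real.sqrt (((R * Y)ᴴ * (R * Y)).trace.re) :=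
        NS.cs' R (R * Y)
    _ ≤ Real.sqrt ((Q.trace).re) * Real.sqrt ((Q.trace).re) := by
        apply mul_le_mul
        · rw [hRH, hRR]
        · exact Real.sqrt_le_sqrt hb
        · exact Real.sqrt_nonneg _
        · exact Real.sqrt_nonneg _
    _ = (Q.trace).re := Real.mul_self_sqrt hQtr


end NSLemmas

set_option maxHeartbeats 1000000 in
/-- Nayak–Shor inequality: for density matrices ρ, σ, ξ on the same space,
F(ρ, ξ) + F(σ, ξ) ≤ 1 + √(F(ρ, σ)). -/
theorem fid_add_fid_le_one_add_sqrt_fid {d : ℕ}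
    (ρ σ ξ : Matrix (Fin d) (Fin d) ℂ)
    (hρ : ρ.PosSemidef) (hρtr : ρ.trace = 1)
    (hσ : σ.PosSemidef) (hσtr : σ.trace = 1)
    (hξ : ξ.PosSemidef) (hξtr : ξ.trace = 1) :
    fid ρ ξ + fid σ ξ ≤ 1 + Real.sqrt (fid ρ σ) := by
  simp only [fid]
  have hsρ : matSqrt ρ = hρ.sqrt := matSqrt_of_posSemidef hρ
  have hsσ : matSqrt σ = hσ.sqrt := matSqrt_of_posSemidef hσ
  have hsξ : matSqrt ξ = hξ.sqrt := matSqrt_of_posSemidef hξ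
  have hρH : (matSqrt ρ)ᴴ = matSqrt ρ := by rw [hsρ]; exact hρ.posSemidef_sqrt.isHermitian.eq
  have hσH : (matSqrt σ)ᴴ = matSqrt σ := by rw [hsσ]; exact hσ.posSemidef_sqrt.isHermitian.eq
  have hξH : (matSqrt ξ)ᴴ = matSqrt ξ := by rw [hsξ]; exact hξ.posSemidef_sqrt.isHermitian.eq
  have hρ2 : matSqrt ρ * matSqrt ρ = ρ := by rw [hsρ]; exact hρ.sqrt_mul_self
  have hσ2 : matSqrt σ * matSqrt σ = σ := by rw [hsσ]; exact hσ.sqrt_mul_self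
  have hξ2 : matSqrt ξ * matSqrt ξ = ξ := by rw [hsξ]; exact hξ.sqrt_mul_self
  set A₁ : Matrix (Fin d) (Fin d) ℂ := matSqrt ξ * matSqrt ρ with hA₁def
  set A₂ : Matrix (Fin d) (Fin d) ℂ := matSqrt ξ * matSqrt σ with hA₂def
  have hA₁ : A₁ * A₁ᴴ = matSqrt ξ * ρ * matSqrt ξ := by
    calc A₁ * A₁ᴴ = matSqrt ξ * (matSqrt ρ * matSqrt ρ) * matSqrt ξ := by
          rw [hA₁def, conjTranspose_mul, hρH, hξH]
          simp only [Matrix.mul_assoc]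
      _ = matSqrt ξ * ρ * matSqrt ξ := by rw [hρ2]
  have hA₂ : A₂ * A₂ᴴ = matSqrt ξ * σ * matSqrt ξ := by
    calc A₂ * A₂ᴴ = matSqrt ξ * (matSqrt σ * matSqrt σ) * matSqrt ξ := by
          rw [hA₂def, conjTranspose_mul, hσH, hξH]
          simp only [Matrix.mul_assoc]
      _ = matSqrt ξ * σ * matSqrt ξ := by rw [hσ2]
  obtain ⟨V₁, hu1, hu2, hu3, hu4⟩ := NS.polar A₁
  obtain ⟨V₂, hv1, hv2, hv3, hv4⟩ := NS.polar A₂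
  rw [hA₁] at hu1 hu2
  rw [hA₂] at hv1 hv2
  set Q₁ : Matrix (Fin d) (Fin d) ℂ := matSqrt (matSqrt ξ * ρ * matSqrt ξ) with hQ₁def
  set Q₂ : Matrix (Fin d) (Fin d) ℂ := matSqrt (matSqrt ξ * σ * matSqrt ξ) with hQ₂def
  set Q₃ : Matrix (Fin d) (Fin d) ℂ := matSqrt (matSqrt σ * ρ * matSqrt σ) with hQ₃def
  have hQ₁psd : Q₁.PosSemidef := by
    have h := hρ.mul_mul_conjTranspose_same (matSqrt ξ)
    rw [hξH] at h
    rw [hQ₁def, matSqrt_of_posSemidef h]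
    exact h.posSemidef_sqrt
  have hQ₂psd : Q₂.PosSemidef := by
    have h := hσ.mul_mul_conjTranspose_same (matSqrt ξ)
    rw [hξH] at h
    rw [hQ₂def, matSqrt_of_posSemidef h]
    exact h.posSemidef_sqrt
  have hQ₃psd : Q₃.PosSemidef := by
    have h := hρ.mul_mul_conjTranspose_same (matSqrt σ)
    rw [hσH] at h
    rw [hQ₃def, matSqrt_of_posSemidef h]
    exact h.posSemidef_sqrt
  set α : ℝ := Q₁.trace.re with hαdef
  set β : ℝ := Q₂.trace.re with hβdef
  set γ : ℝ := Q₃.trace.re with hγdef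
  have hα0 : 0 ≤ α := NS.trace_re_nonneg hQ₁psd
  have hβ0 : 0 ≤ β := NS.trace_re_nonneg hQ₂psd
  have hγ0 : 0 ≤ γ := NS.trace_re_nonneg hQ₃psd
  set u : Matrix (Fin d) (Fin d) ℂ := matSqrt ρ * V₁ᴴ with hudef
  set v : Matrix (Fin d) (Fin d) ℂ := matSqrt σ * V₂ᴴ with hvdef
  set w : Matrix (Fin d) (Fin d) ℂ := matSqrt ξ with hwdef
  -- wᴴ * u = Q₁
  have k1 : wᴴ * u = Q₁ := by
    rw [hwdef, hudef, hξH, ← Matrix.mul_assoc, ← hA₁def, ← hu1, Matrix.mul_assoc, hu2]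
  have k2 : wᴴ * v = Q₂ := by
    rw [hwdef, hvdef, hξH, ← Matrix.mul_assoc, ← hA₂def, ← hv1, Matrix.mul_assoc, hv2]
  have k1t : (wᴴ * u).trace = (α : ℂ) := by rw [k1, NS.trace_eq_re hQ₁psd]
  have k2t : (wᴴ * v).trace = (β : ℂ) := by rw [k2, NS.trace_eq_re hQ₂psd]
  have k1t' : (uᴴ * w).trace = (α : ℂ) := by
    calc (uᴴ * w).trace = ((wᴴ * u)ᴴ).trace := by
          rw [conjTranspose_mul wᴴ u, conjTranspose_conjTranspose]
      _ = star (wᴴ * u).trace := Matrix.trace_conjTranspose _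
      _ = (α : ℂ) := by rw [k1t, RCLike.star_def, Complex.conj_ofReal]
  have k2t' : (vᴴ * w).trace = (β : ℂ) := by
    calc (vᴴ * w).trace = ((wᴴ * v)ᴴ).trace := by
          rw [conjTranspose_mul wᴴ v, conjTranspose_conjTranspose]
      _ = star (wᴴ * v).trace := Matrix.trace_conjTranspose _
      _ = (β : ℂ) := by rw [k2t, RCLike.star_def, Complex.conj_ofReal]
  -- norms
  have k3 : (uᴴ * u).trace.re ≤ 1 := by
    have h1 : uᴴ * u = V₁ * (ρ * V₁ᴴ) := by
      calc uᴴ * u = V₁ * (matSqrt ρ * matSqrt ρ) * V₁ᴴ := by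
            rw [hudef, conjTranspose_mul, conjTranspose_conjTranspose, hρH]
            simp only [Matrix.mul_assoc]
        _ = V₁ * (ρ * V₁ᴴ) := by rw [hρ2, Matrix.mul_assoc]
    have h2 : (uᴴ * u).trace = (ρ * (V₁ᴴ * V₁)).trace := by
      rw [h1, Matrix.trace_mul_comm, Matrix.mul_assoc]
    have h3 : 0 ≤ ((ρ * (1 - V₁ᴴ * V₁)).trace).re := NS.trace_mul_re_nonneg hρ hu4
    have h4 : (ρ * (1 - V₁ᴴ * V₁)).trace = ρ.trace - (ρ * (V₁ᴴ * V₁)).trace := by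
      rw [Matrix.mul_sub, Matrix.mul_one, Matrix.trace_sub]
    rw [h4, hρtr, Complex.sub_re, Complex.one_re] at h3
    rw [h2]; linarith
  have k4 : (vᴴ * v).trace.re ≤ 1 := by
    have h1 : vᴴ * v = V₂ * (σ * V₂ᴴ) := by
      calc vᴴ * v = V₂ * (matSqrt σ * matSqrt σ) * V₂ᴴ := by
            rw [hvdef, conjTranspose_mul, conjTranspose_conjTranspose, hσH]
            simp only [Matrix.mul_assoc]
        _ = V₂ * (σ * V₂ᴴ) := by rw [hσ2, Matrix.mul_assoc]
    have h2 : (vᴴ * v).trace = (σ * (V₂ᴴ * V₂)).trace := by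
      rw [h1, Matrix.trace_mul_comm, Matrix.mul_assoc]
    have h3 : 0 ≤ ((σ * (1 - V₂ᴴ * V₂)).trace).re := NS.trace_mul_re_nonneg hσ hv4
    have h4 : (σ * (1 - V₂ᴴ * V₂)).trace = σ.trace - (σ * (V₂ᴴ * V₂)).trace := by
      rw [Matrix.mul_sub, Matrix.mul_one, Matrix.trace_sub]
    rw [h4, hσtr, Complex.sub_re, Complex.one_re] at h3
    rw [h2]; linarith
  -- cross term
  have k6 : ‖(uᴴ * v).trace‖ ≤ γ := by
    have h1 : (uᴴ * v).trace = ((matSqrt ρ * matSqrt σ) * (V₂ᴴ * V₁)).trace := by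
      have e1 : uᴴ * v = V₁ * ((matSqrt ρ * matSqrt σ) * V₂ᴴ) := by
        rw [hudef, hvdef, conjTranspose_mul, conjTranspose_conjTranspose, hρH]
        simp only [Matrix.mul_assoc]
      rw [e1, Matrix.trace_mul_comm]
      simp only [Matrix.mul_assoc]
    have hX : (1 - (V₂ᴴ * V₁) * (V₂ᴴ * V₁)ᴴ).PosSemidef := by
      have e2 : (V₂ᴴ * V₁) * (V₂ᴴ * V₁)ᴴ = V₂ᴴ * (V₁ * V₁ᴴ) * V₂ := by
        rw [conjTranspose_mul, conjTranspose_conjTranspose]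
        simp only [Matrix.mul_assoc]
      have e3 : 1 - (V₂ᴴ * V₁) * (V₂ᴴ * V₁)ᴴ
          = (1 - V₂ᴴ * V₂) + V₂ᴴ * (1 - V₁ * V₁ᴴ) * V₂ := by
        rw [e2, Matrix.mul_sub, Matrix.mul_one, Matrix.sub_mul]
        abel
      rw [e3]
      exact hv4.add (hu3.conjTranspose_mul_mul_same V₂)
    have h2 := NS.abs_trace_mul_le (matSqrt ρ * matSqrt σ) (V₂ᴴ * V₁) hX
    have h3 : (matSqrt ρ * matSqrt σ)ᴴ * (matSqrt ρ * matSqrt σ)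
        = matSqrt σ * ρ * matSqrt σ := by
      calc (matSqrt ρ * matSqrt σ)ᴴ * (matSqrt ρ * matSqrt σ)
          = matSqrt σ * (matSqrt ρ * matSqrt ρ) * matSqrt σ := by
            rw [conjTranspose_mul, hρH, hσH]
            simp only [Matrix.mul_assoc]
        _ = matSqrt σ * ρ * matSqrt σ := by rw [hρ2]
    rw [h3] at h2
    rw [h1]
    exact h2
  -- the vector z
  set z : Matrix (Fin d) (Fin d) ℂ := (α : ℂ) • u + (β : ℂ) • v with hzdef
  set s : ℝ := α ^ 2 + β ^ 2 with hsdef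
  have kz : (zᴴ * w).trace = (s : ℂ) := by
    rw [hzdef, conjTranspose_add, conjTranspose_smul, conjTranspose_smul, Matrix.add_mul,
      Matrix.smul_mul, Matrix.smul_mul, Matrix.trace_add, Matrix.trace_smul, Matrix.trace_smul,
      k1t', k2t', hsdef]
    push_cast
    simp [smul_eq_mul]
    ring
  have expand : (zᴴ * z).trace
      = (α : ℂ) * (α : ℂ) * (uᴴ * u).trace + (α : ℂ) * (β : ℂ) * (uᴴ * v).trace
        + (β : ℂ) * (α : ℂ) * (vᴴ * u).trace + (β : ℂ) * (β : ℂ) * (vᴴ * v).trace := by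
    rw [hzdef]
    simp only [conjTranspose_add, conjTranspose_smul, Matrix.add_mul, Matrix.mul_add,
      Matrix.smul_mul, Matrix.mul_smul, Matrix.trace_add, Matrix.trace_smul, smul_smul,
      smul_eq_mul, RCLike.star_def, Complex.conj_ofReal]
    ring
  have hvu : (vᴴ * u).trace.re = (uᴴ * v).trace.re := by
    have h : vᴴ * u = (uᴴ * v)ᴴ := by
      rw [conjTranspose_mul uᴴ v, conjTranspose_conjTranspose]
    rw [h, Matrix.trace_conjTranspose]
    simp
  have kuvre : (uᴴ * v).trace.re ≤ γ :=
    (Complex.re_le_norm _).trans k6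
  have kzz : (zᴴ * z).trace.re ≤ s * (1 + γ) := by
    have h := congrArg Complex.re expand
    simp only [Complex.add_re, ← Complex.ofReal_mul, Complex.re_ofReal_mul] at h
    rw [h, hvu, hsdef]
    nlinarith [k3, k4, kuvre, mul_nonneg hα0 hβ0, sq_nonneg (α - β), sq_nonneg (α + β),
      mul_nonneg (mul_nonneg hα0 hβ0) hγ0]
  have hww : (wᴴ * w).trace.re = 1 := by
    rw [hwdef, hξH, hξ2, hξtr, Complex.one_re]
  have hs0 : 0 ≤ s := by rw [hsdef]; positivity
  have hzz0 : 0 ≤ (zᴴ * z).trace.re :=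
    NS.trace_re_nonneg (posSemidef_conjTranspose_mul_self z)
  have hcs := NS.cs' z w
  rw [kz, hww, Real.sqrt_one, mul_one] at hcs
  have habs : ‖(s : ℂ)‖ = s := by
    rw [Complex.norm_real, Real.norm_eq_abs, abs_of_nonneg hs0]
  rw [habs] at hcs
  have hfin : s ≤ Real.sqrt (s * (1 + γ)) :=
    hcs.trans (Real.sqrt_le_sqrt kzz)
  have hsq : s ^ 2 ≤ s * (1 + γ) := by
    have h1 : s ^ 2 ≤ Real.sqrt (s * (1 + γ)) ^ 2 := pow_le_pow_left₀ hs0 hfin 2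
    rwa [Real.sq_sqrt (mul_nonneg hs0 (by linarith))] at h1
  rw [Real.sqrt_sq hγ0]
  nlinarith [hsq, hs0, hγ0]
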